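/- Let N be a proper normal subgroup of a group S, B any S-act, and I a nonempty set. Then B ⊔ (S/N)^{(*)I} is geometrically equivalent to B ⊔ S/N; in particular, the coproduct of I copies of S/N is geometrically equivalent to S/N. -/

import Mathlib

/-- The kernel of a map, as a set of pairs. -/
def actKer {A B : Type} (f : A → B) : Set (A × A) := {p | f p.1 = f p.2}

/-- A homomorphism of left `S`-acts is an `S`-equivariant map. -/
def IsActHom (S : Type) [Monoid S] {A B : Type} [MulAction S A] [MulAction S B]
    (f : A → B) : Prop := ∀ (s : S) (a : A), f (s • a) = s • f a

/-- The free left `S`-act on `n` generators: a coproduct of `n` copies of `S`. -/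
def FreeAct (S : Type) (n : ℕ) : Type := Fin n × S

instance (S : Type) [Monoid S] (n : ℕ) : SMul S (FreeAct S n) :=
  ⟨fun s p => (p.1, s * p.2)⟩

instance (S : Type) [Monoid S] (n : ℕ) : MulAction S (FreeAct S n) where
  one_smul p := show (p.1, 1 * p.2) = p by rw [one_mul]; rfl
  mul_smul s t p := show (p.1, (s * t) * p.2) = (p.1, s * (t * p.2)) by rw [mul_assoc]

/-- A congruence on an `S`-act: an equivalence relation compatible with the action. -/
def IsCongruence (S : Type) [Monoid S] {A : Type} [MulAction S A]
    (T : Set (A × A)) : Prop :=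
  Equivalence (fun a b => (a, b) ∈ T) ∧
    ∀ (s : S) (a b : A), (a, b) ∈ T → (s • a, s • b) ∈ T

/-- The `G`-closure `T''` of a binary relation `T` on a free `S`-act:
the intersection of the kernels of all homomorphisms into `G` whose kernel contains `T`. -/
def actClosure (S : Type) [Monoid S] (G : Type) [MulAction S G] {n : ℕ}
    (T : Set (FreeAct S n × FreeAct S n)) : Set (FreeAct S n × FreeAct S n) :=
  {p | ∀ f : FreeAct S n → G, IsActHom S f → T ⊆ actKer f → f p.1 = f p.2}

/-- `T` is a `G`-closed congruence: an intersection of kernels of a set of homomorphisms. -/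
def GClosed (S : Type) [Monoid S] (G : Type) [MulAction S G] {n : ℕ}
    (T : Set (FreeAct S n × FreeAct S n)) : Prop :=
  ∃ A : Set (FreeAct S n → G), (∀ f ∈ A, IsActHom S f) ∧
    T = {p | ∀ f ∈ A, f p.1 = f p.2}

/-- Geometric equivalence of `S`-acts. -/
def GeomEquiv (S : Type) [Monoid S] (G₁ G₂ : Type) [MulAction S G₁] [MulAction S G₂] : Prop :=
  ∀ (n : ℕ) (T : Set (FreeAct S n × FreeAct S n)),
    actClosure S G₁ T = actClosure S G₂ T

/-- Coproduct (disjoint union) action on `A ⊕ B`. -/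
instance (S : Type) [Monoid S] {A B : Type} [MulAction S A] [MulAction S B] :
    SMul S (A ⊕ B) :=
  ⟨fun s x => match x with
    | Sum.inl a => Sum.inl (s • a)
    | Sum.inr b => Sum.inr (s • b)⟩

instance (S : Type) [Monoid S] {A B : Type} [MulAction S A] [MulAction S B] :
    MulAction S (A ⊕ B) where
  one_smul x := by
    cases x with
    | inl a => show Sum.inl ((1 : S) • a) = _; rw [one_smul]
    | inr b => show Sum.inr ((1 : S) • b) = _; rw [one_smul]
  mul_smul s t x := by
    cases x with
    | inl a => show Sum.inl ((s * t) • a) = Sum.inl (s • t • a); rw [mul_smul]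
    | inr b => show Sum.inr ((s * t) • b) = Sum.inr (s • t • b); rw [mul_smul]

/-- `Copies I A` is the coproduct of `I` copies of the `S`-act `A`. -/
def Copies (I A : Type) : Type := I × A

instance (S : Type) [Monoid S] {I A : Type} [MulAction S A] : SMul S (Copies I A) :=
  ⟨fun s p => (p.1, s • p.2)⟩

instance (S : Type) [Monoid S] {I A : Type} [MulAction S A] : MulAction S (Copies I A) where
  one_smul p := show (p.1, (1 : S) • p.2) = p by rw [one_smul]; rfl
  mul_smul s t p := show (p.1, (s * t) • p.2) = (p.1, s • t • p.2) by rw [mul_smul]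



/-- If `G₂` embeds equivariantly into a power of `G₁`, then `G₁`-closures are contained
in `G₂`-closures. -/
lemma actClosure_subset_of_embed (S : Type) [Monoid S] (G₁ G₂ J : Type)
    [MulAction S G₁] [MulAction S G₂]
    (ι : G₂ → J → G₁) (hinj : Function.Injective ι) (hhom : IsActHom S ι) :
    ∀ (n : ℕ) (T : Set (FreeAct S n × FreeAct S n)),
      actClosure S G₁ T ⊆ actClosure S G₂ T := by
  intro n T p hp f hf hT
  apply hinj
  funext j
  exact hp (fun x => ι (f x) j)
    (fun s a => by
      calc ι (f (s • a)) j = ι (s • f a) j := by rw [hf s a]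
        _ = (s • ι (f a)) j := by rw [hhom s (f a)]
        _ = s • ι (f a) j := rfl)
    (fun q hq => congrArg (fun g => ι g j) (hT hq))

lemma geomEquiv_of_embeds (S : Type) [Monoid S] (G₁ G₂ J K : Type)
    [MulAction S G₁] [MulAction S G₂]
    (ι : G₂ → J → G₁) (hi : Function.Injective ι) (hih : IsActHom S ι)
    (κ : G₁ → K → G₂) (hk : Function.Injective κ) (hkh : IsActHom S κ) :
    GeomEquiv S G₁ G₂ := fun n T =>
  Set.Subset.antisymm
    (actClosure_subset_of_embed S G₁ G₂ J ι hi hih n T)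
    (actClosure_subset_of_embed S G₂ G₁ K κ hk hkh n T)

/-- For a proper normal subgroup `N` of a group `S`, any `S`-act `B`, and
a nonempty set `I`: `B ⊔ (S/N)^{(*)I} ∼ B ⊔ S/N`, and in particular
`(S/N)^{(*)I} ∼ S/N`. -/
theorem copies_of_quotient_by_normal_geom_equiv
    (S : Type) [Group S] (N : Subgroup S) [N.Normal] (hN : N ≠ ⊤)
    (B : Type) [MulAction S B] (I : Type) [Nonempty I] :
    GeomEquiv S (B ⊕ Copies I (S ⧸ N)) (B ⊕ (S ⧸ N)) ∧
    GeomEquiv S (Copies I (S ⧸ N)) (S ⧸ N) := by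
  classical
  obtain ⟨t, ht⟩ : ∃ t : S, t ∉ N := by
    by_contra h
    push_neg at h
    exact hN ((Subgroup.eq_top_iff' N).mpr h)
  have hmk : (QuotientGroup.mk t : S ⧸ N) ≠ 1 := fun h => ht ((QuotientGroup.eq_one_iff t).mp h)
  set tb : S ⧸ N := QuotientGroup.mk t with htb
  have smul_mul : ∀ (s : S) (q : S ⧸ N), s • (q * tb) = (s • q) * tb := by
    intro s q
    induction q using QuotientGroup.induction_on with
    | H x =>
      show QuotientGroup.mk (s * (x * t)) = QuotientGroup.mk (s * x * t)
      rw [mul_assoc]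
  obtain ⟨i₀⟩ := (inferInstance : Nonempty I)
  -- embedding B ⊕ S⧸N into one copy of B ⊕ Copies I (S⧸N)
  let e1 : (B ⊕ (S ⧸ N)) → Unit → (B ⊕ Copies I (S ⧸ N)) := fun x _ =>
    match x with
    | Sum.inl b => Sum.inl b
    | Sum.inr q => Sum.inr ((i₀, q) : Copies I (S ⧸ N))
  have he1inj : Function.Injective e1 := by
    intro x y h
    have h0 := congrFun h ()
    cases x with
    | inl b => cases y with
      | inl b' => simp only [e1, Sum.inl.injEq] at h0; rw [h0]
      | inr q' => exact absurd h0 (by simp [e1])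
    | inr q => cases y with
      | inl b' => exact absurd h0 (by simp [e1])
      | inr q' =>
        have h2 : ((i₀, q) : I × (S ⧸ N)) = (i₀, q') := Sum.inr.inj h0
        exact congrArg Sum.inr (congrArg Prod.snd h2)
  have he1hom : IsActHom S e1 := by
    intro s x
    cases x <;> rfl
  -- embedding B ⊕ Copies I (S⧸N) into a power of B ⊕ S⧸N
  let e2 : (B ⊕ Copies I (S ⧸ N)) → Option I → (B ⊕ (S ⧸ N)) := fun x j =>
    match x with
    | Sum.inl b => Sum.inl b
    | Sum.inr p => Sum.inr (if j = some p.1 then p.2 else p.2 * tb)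
  have e2n : ∀ (i : I) (q : S ⧸ N), e2 (Sum.inr (i, q)) none = Sum.inr (q * tb) := by
    intro i q
    show Sum.inr (if (none : Option I) = some i then q else q * tb) = _
    rw [if_neg (by simp)]
  have e2s : ∀ (i i' : I) (q : S ⧸ N),
      e2 (Sum.inr (i', q)) (some i) = Sum.inr (if some i = some i' then q else q * tb) := by
    intro i i' q; rfl
  have he2inj : Function.Injective e2 := by
    intro x y h
    cases x with
    | inl b => cases y with
      | inl b' =>
        have h0 := congrFun h none
        simp only [e2, Sum.inl.injEq] at h0; rw [h0]
      | inr p' =>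
        obtain ⟨i', q'⟩ := p'
        have h0 := congrFun h none
        rw [e2n] at h0
        exact absurd h0 (by simp)
    | inr p => cases y with
      | inl b' =>
        obtain ⟨i, q⟩ := p
        have h0 := congrFun h none
        rw [e2n] at h0
        exact absurd h0 (by simp)
      | inr p' =>
        obtain ⟨i, q⟩ := p
        obtain ⟨i', q'⟩ := p'
        have h0 := congrFun h none
        rw [e2n, e2n] at h0
        have hq : q = q' := mul_right_cancel (Sum.inr.inj h0)
        subst hq
        have h1 := congrFun h (some i)
        rw [e2s, e2s, if_pos rfl] at h1
        by_cases hii : i = i'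
        · rw [hii]
        · rw [if_neg (by simpa using hii)] at h1
          have h2 : (1 : S ⧸ N) = tb :=
            mul_left_cancel (a := q) (by rw [mul_one]; exact Sum.inr.inj h1)
          exact absurd h2.symm hmk
  have he2hom : IsActHom S e2 := by
    intro s x
    cases x with
    | inl b => rfl
    | inr p =>
      obtain ⟨i, q⟩ := p
      funext j
      show (Sum.inr (if j = some i then s • q else (s • q) * tb) : B ⊕ (S ⧸ N))
        = s • (Sum.inr (if j = some i then q else q * tb) : B ⊕ (S ⧸ N))
      by_cases hj : j = some i
      · rw [if_pos hj, if_pos hj]; rfl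
      · rw [if_neg hj, if_neg hj]
        exact congrArg Sum.inr (smul_mul s q).symm
  -- embedding S⧸N into one copy of Copies I (S⧸N)
  let e3 : (S ⧸ N) → Unit → Copies I (S ⧸ N) := fun q _ => (i₀, q)
  have he3inj : Function.Injective e3 := by
    intro x y h
    have h0 := congrFun h ()
    exact congrArg Prod.snd (h0 : ((i₀, x) : I × (S ⧸ N)) = (i₀, y))
  have he3hom : IsActHom S e3 := fun s q => rfl
  -- embedding Copies I (S⧸N) into a power of S⧸N
  let e4 : Copies I (S ⧸ N) → Option I → (S ⧸ N) := fun p j =>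
    if j = some p.1 then p.2 else p.2 * tb
  have e4n : ∀ (i : I) (q : S ⧸ N), e4 (i, q) none = q * tb := by
    intro i q
    show (if (none : Option I) = some i then q else q * tb) = _
    rw [if_neg (by simp)]
  have e4s : ∀ (i i' : I) (q : S ⧸ N),
      e4 (i', q) (some i) = (if some i = some i' then q else q * tb) := by
    intro i i' q; rfl
  have he4inj : Function.Injective e4 := by
    intro p p' h
    obtain ⟨i, q⟩ := p
    obtain ⟨i', q'⟩ := p'
    have h0 := congrFun h none
    rw [e4n, e4n] at h0
    have hq : q = q' := mul_right_cancel h0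
    subst hq
    have h1 := congrFun h (some i)
    rw [e4s, e4s, if_pos rfl] at h1
    by_cases hii : i = i'
    · show ((i, q) : I × (S ⧸ N)) = (i', q); rw [hii]
    · rw [if_neg (by simpa using hii)] at h1
      have h2 : (1 : S ⧸ N) = tb := mul_left_cancel (a := q) (by rw [mul_one]; exact h1)
      exact absurd h2.symm hmk
  have he4hom : IsActHom S e4 := by
    intro s p
    obtain ⟨i, q⟩ := p
    funext j
    show (if j = some i then s • q else (s • q) * tb)
      = s • (if j = some i then q else q * tb)
    by_cases hj : j = some i
    · rw [if_pos hj, if_pos hj]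
    · rw [if_neg hj, if_neg hj]
      exact (smul_mul s q).symm
  exact ⟨geomEquiv_of_embeds S _ _ _ _ e1 he1inj he1hom e2 he2inj he2hom,
    geomEquiv_of_embeds S _ _ _ _ e3 he3inj he3hom e4 he4inj he4hom⟩
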